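/- Reduction of strong constraint k-modules is compatible with the tensor product: for strong constraint k-modules E and F over a field k (regarded as the constraint algebra (k,k,0)), there is a natural isomorphism (E ⊗ F)_red ≅ E_red ⊗_k F_red, where (E⊗F)_T = E_T ⊗ F_T, (E⊗F)_W = E_W ⊗ F_W, (E⊗F)_N = E_N ⊗ F_W + E_W ⊗ F_N. -/

import Mathlib

open TensorProduct

lemma range_tensor_map_congr_left {R M₁ M₂ N P Q : Type*} [CommRing R]
    [AddCommGroup M₁] [AddCommGroup M₂] [AddCommGroup N] [AddCommGroup P] [AddCommGroup Q]
    [Module R M₁] [Module R M₂] [Module R N] [Module R P] [Module R Q]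
    (a : M₁ →ₗ[R] P) (a' : M₂ →ₗ[R] P) (h : LinearMap.range a = LinearMap.range a')
    (b : N →ₗ[R] Q) :
    LinearMap.range (TensorProduct.map a b) = LinearMap.range (TensorProduct.map a' b) := by
  rw [TensorProduct.range_map_eq_span_tmul, TensorProduct.range_map_eq_span_tmul]
  congr 1
  ext t
  simp only [Set.mem_setOf_eq]
  constructor
  · rintro ⟨m, n, rfl⟩
    obtain ⟨m', hm'⟩ : a m ∈ LinearMap.range a' := h ▸ LinearMap.mem_range_self a m
    exact ⟨m', n, by rw [hm']⟩
  · rintro ⟨m, n, rfl⟩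
    obtain ⟨m', hm'⟩ : a' m ∈ LinearMap.range a := h.symm ▸ LinearMap.mem_range_self a' m
    exact ⟨m', n, by rw [hm']⟩

lemma range_tensor_map_congr_right {R M N₁ N₂ P Q : Type*} [CommRing R]
    [AddCommGroup M] [AddCommGroup N₁] [AddCommGroup N₂] [AddCommGroup P] [AddCommGroup Q]
    [Module R M] [Module R N₁] [Module R N₂] [Module R P] [Module R Q]
    (a : M →ₗ[R] P) (b : N₁ →ₗ[R] Q) (b' : N₂ →ₗ[R] Q)
    (h : LinearMap.range b = LinearMap.range b') :
    LinearMap.range (TensorProduct.map a b) = LinearMap.range (TensorProduct.map a b') := by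
  rw [TensorProduct.range_map_eq_span_tmul, TensorProduct.range_map_eq_span_tmul]
  congr 1
  ext t
  simp only [Set.mem_setOf_eq]
  constructor
  · rintro ⟨m, n, rfl⟩
    obtain ⟨n', hn'⟩ : b n ∈ LinearMap.range b' := h ▸ LinearMap.mem_range_self b n
    exact ⟨m, n', by rw [hn']⟩
  · rintro ⟨m, n, rfl⟩
    obtain ⟨n', hn'⟩ : b' n ∈ LinearMap.range b := h.symm ▸ LinearMap.mem_range_self b' n
    exact ⟨m, n', by rw [hn']⟩

/-- Reduction of strong constraint `k`-modules is compatible with the tensor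
product: for subspaces `E_N ⊆ E_W ⊆ E_T` and `F_N ⊆ F_W ⊆ F_T` one has a
natural isomorphism `(E ⊗ F)_red ≅ E_red ⊗_k F_red`, where inside `E_T ⊗ F_T`
one sets `(E⊗F)_W = E_W ⊗ F_W` and `(E⊗F)_N = E_N ⊗ F_W + E_W ⊗ F_N`, and
`X_red = X_W / X_N`. -/
theorem constraint_tensor_red
    {k : Type*} [Field k]
    {E F : Type*} [AddCommGroup E] [AddCommGroup F] [Module k E] [Module k F]
    (EW EN : Submodule k E) (hE : EN ≤ EW)
    (FW FN : Submodule k F) (hF : FN ≤ FW) :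
    Nonempty
      ((LinearMap.range (TensorProduct.map EW.subtype FW.subtype) ⧸
          ((LinearMap.range (TensorProduct.map EN.subtype FW.subtype)
              ⊔ LinearMap.range (TensorProduct.map EW.subtype FN.subtype)).comap
            (LinearMap.range (TensorProduct.map EW.subtype FW.subtype)).subtype))
        ≃ₗ[k] ((EW ⧸ EN.comap EW.subtype) ⊗[k] (FW ⧸ FN.comap FW.subtype))) := by
  classical
  set M' : Submodule k EW := EN.comap EW.subtype with hM'
  set N' : Submodule k FW := FN.comap FW.subtype with hN'
  set f : (EW ⊗[k] FW) →ₗ[k] (E ⊗[k] F) := TensorProduct.map EW.subtype FW.subtype with hfdef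
  -- injectivity of f
  have hf : Function.Injective f := by
    rw [hfdef, ← LinearMap.lTensor_comp_rTensor (f := EW.subtype) (g := FW.subtype)]
    exact (Module.Flat.lTensor_preserves_injective_linearMap _ FW.injective_subtype).comp
      (Module.Flat.rTensor_preserves_injective_linearMap _ EW.injective_subtype)
  set g1 : (M' ⊗[k] FW) →ₗ[k] (EW ⊗[k] FW) := TensorProduct.map M'.subtype LinearMap.id
  set g2 : (EW ⊗[k] N') →ₗ[k] (EW ⊗[k] FW) := TensorProduct.map LinearMap.id N'.subtype
  have hrange1 : LinearMap.range (EW.subtype.comp M'.subtype) = LinearMap.range EN.subtype := by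
    rw [LinearMap.range_comp, Submodule.range_subtype, Submodule.range_subtype, hM',
      Submodule.map_comap_subtype, inf_eq_right.mpr hE]
  have hrange2 : LinearMap.range (FW.subtype.comp N'.subtype) = LinearMap.range FN.subtype := by
    rw [LinearMap.range_comp, Submodule.range_subtype, Submodule.range_subtype, hN',
      Submodule.map_comap_subtype, inf_eq_right.mpr hF]
  have hA : LinearMap.range (TensorProduct.map EN.subtype FW.subtype)
      = Submodule.map f (LinearMap.range g1) := by
    rw [← LinearMap.range_comp, hfdef, ← TensorProduct.map_comp, LinearMap.comp_id]
    exact range_tensor_map_congr_left _ _ hrange1.symm _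
  have hB : LinearMap.range (TensorProduct.map EW.subtype FN.subtype)
      = Submodule.map f (LinearMap.range g2) := by
    rw [← LinearMap.range_comp, hfdef, ← TensorProduct.map_comp, LinearMap.comp_id]
    exact range_tensor_map_congr_right _ _ _ hrange2.symm
  set S : Submodule k (EW ⊗[k] FW) := LinearMap.range g1 ⊔ LinearMap.range g2 with hS
  set e : (EW ⊗[k] FW) ≃ₗ[k] LinearMap.range f := LinearEquiv.ofInjective f hf with he
  have key : Submodule.map (e : (EW ⊗[k] FW) →ₗ[k] LinearMap.range f) S
      = ((LinearMap.range (TensorProduct.map EN.subtype FW.subtype)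
          ⊔ LinearMap.range (TensorProduct.map EW.subtype FN.subtype)).comap
            (LinearMap.range f).subtype) := by
    rw [hA, hB, ← Submodule.map_sup]
    ext x
    simp only [Submodule.mem_map, Submodule.mem_comap, Submodule.coe_subtype]
    constructor
    · rintro ⟨y, hy, rfl⟩
      exact ⟨y, hy, by simp [he]⟩
    · rintro ⟨y, hy, hxy⟩
      exact ⟨y, hy, by ext; simp [he, hxy]⟩
  have equiv1 := (Submodule.Quotient.equiv S _ e key)
  have equiv2 := TensorProduct.quotientTensorQuotientEquiv (R := k) M' N'
  exact ⟨equiv1.symm.trans equiv2.symm⟩
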